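/- arXiv:1801.07965 — 2 statements merged into one kernel-verified Lean document; each statement's English description precedes it below -/
import Mathlib

section
/- Let F be a field, let n ≥ 2, let x₁, …, xₙ be pairwise distinct elements of F, and let t be an integer with 1 ≤ t ≤ n−1. Let p be a polynomial over F of degree at most t−1 and let f be a polynomial over F of degree at most n−t−1. Define c⊥ᵢ = f(xᵢ) · ∏_{j ≠ i} (xᵢ − xⱼ)⁻¹ for each i. Then Σ_{i=1}^{n} c⊥ᵢ · p(xᵢ) = 0. -/
open Polynomial Finset

lemma basis_leadingCoeff {F : Type*} [Field F] {ι : Type*} [DecidableEq ι]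
    {s : Finset ι} {v : ι → F} {i : ι} (hvs : Set.InjOn v s) (hi : i ∈ s) :
    (Lagrange.basis s v i).coeff (#s - 1) = ∏ j ∈ s.erase i, (v i - v j)⁻¹ := by
  have hd : (Lagrange.basis s v i).natDegree = #s - 1 := Lagrange.natDegree_basis hvs hi
  rw [← hd, ← leadingCoeff, Lagrange.basis, leadingCoeff_prod]
  refine prod_congr rfl fun j hj => ?_
  rcases mem_erase.mp hj with ⟨hij, hjs⟩
  have hne : v i ≠ v j := fun h => hij.symm (hvs hi hjs h)
  rw [Lagrange.basisDivisor, leadingCoeff_mul, leadingCoeff_X_sub_C, leadingCoeff_C, mul_one]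

/-- Orthogonality of the Reed–Solomon code for `(n,t)`-Shamir secret sharing with its dual:
for pairwise distinct `x₁, …, xₙ` in a field `F`, `1 ≤ t ≤ n − 1`, `p` of degree `≤ t − 1`,
`f` of degree `≤ n − t − 1`, and `c⊥ᵢ = f(xᵢ)·∏_{j ≠ i}(xᵢ − xⱼ)⁻¹`, one has
`Σᵢ c⊥ᵢ·p(xᵢ) = 0`. -/
theorem stmt_14 {F : Type*} [Field F] (n : ℕ) (hn : 2 ≤ n)
    (x : Fin n → F) (hx : Function.Injective x)
    (t : ℕ) (ht1 : 1 ≤ t) (ht2 : t ≤ n - 1)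
    (p f : Polynomial F)
    (hp : p.degree ≤ (t - 1 : ℕ)) (hf : f.degree ≤ (n - t - 1 : ℕ)) :
    ∑ i, (f.eval (x i) * ∏ j ∈ Finset.univ.erase i, (x i - x j)⁻¹) * p.eval (x i) = 0 := by
  set g : Polynomial F := f * p with hg
  have hinj : Set.InjOn x (Finset.univ : Finset (Fin n)) := fun a _ b _ h => hx h
  have hdeg : g.degree ≤ ((n - 2 : ℕ) : WithBot ℕ) := by
    calc g.degree ≤ f.degree + p.degree := degree_mul_le _ _
    _ ≤ ((n - t - 1 : ℕ) : WithBot ℕ) + ((t - 1 : ℕ) : WithBot ℕ) := add_le_add hf hp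
    _ = ((n - 2 : ℕ) : WithBot ℕ) := by
        rw [← Nat.cast_add, Nat.cast_inj]; omega
  have hlt : g.degree < (#(Finset.univ : Finset (Fin n)) : WithBot ℕ) := by
    refine lt_of_le_of_lt hdeg ?_
    rw [card_univ, Fintype.card_fin, Nat.cast_lt]; omega
  have heq : g = Lagrange.interpolate Finset.univ x (fun i => g.eval (x i)) :=
    Lagrange.eq_interpolate hinj hlt
  have hcoef : g.coeff (n - 1) = 0 := by
    apply coeff_eq_zero_of_degree_lt
    refine lt_of_le_of_lt hdeg ?_
    rw [Nat.cast_lt]; omega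
  have key := hcoef
  rw [heq, Lagrange.interpolate_apply, finset_sum_coeff] at key
  simp only [coeff_C_mul] at key
  have huniv : #(Finset.univ : Finset (Fin n)) = n := by simp
  calc ∑ i, (f.eval (x i) * ∏ j ∈ Finset.univ.erase i, (x i - x j)⁻¹) * p.eval (x i)
      = ∑ i, g.eval (x i) * (Lagrange.basis Finset.univ x i).coeff (n - 1) := by
        refine Finset.sum_congr rfl fun i _ => ?_
        rw [show (n - 1) = #(Finset.univ : Finset (Fin n)) - 1 by rw [huniv],
          basis_leadingCoeff hinj (mem_univ i), hg]
        simp [eval_mul]; ring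
    _ = 0 := key
end

section
/- Let q be a prime and let G be a finite commutative group of cardinality q. Let g, h, y₁, y₂, a₁, a₂ ∈ G, and suppose there are integers e, e′, z, z′ such that e ≢ e′ (mod q), g^z = a₁ · y₁^e, h^z = a₂ · y₂^e, g^{z′} = a₁ · y₁^{e′}, and h^{z′} = a₂ · y₂^{e′}. Then there exists a natural number x such that y₁ = g^x and y₂ = h^x. -/
/-- Special soundness of the DLEQ sigma protocol in a group of prime order `q`: two
accepting transcripts `(a₁, a₂, e, z)` and `(a₁, a₂, e′, z′)` with `e ≢ e′ (mod q)`
determine a common discrete logarithm `x` with `y₁ = g^x` and `y₂ = h^x`. -/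
theorem stmt_15 (q : ℕ) (hq : q.Prime) {G : Type*} [CommGroup G] [Fintype G]
    (hcard : Fintype.card G = q)
    (g h y₁ y₂ a₁ a₂ : G) (e e' z z' : ℤ)
    (hne : ¬ ((q : ℤ) ∣ (e - e')))
    (h1 : g ^ z = a₁ * y₁ ^ e) (h2 : h ^ z = a₂ * y₂ ^ e)
    (h3 : g ^ z' = a₁ * y₁ ^ e') (h4 : h ^ z' = a₂ * y₂ ^ e') :
    ∃ x : ℕ, y₁ = g ^ x ∧ y₂ = h ^ x := by
  have hqpos : 0 < (q : ℤ) := by exact_mod_cast hq.pos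
  have hord : ∀ a : G, a ^ (q : ℤ) = 1 := by
    intro a
    rw [zpow_natCast, ← hcard, pow_card_eq_one]
  have key1 : y₁ ^ (e - e') = g ^ (z - z') := by
    rw [zpow_sub, zpow_sub, h1, h3]
    rw [← div_eq_mul_inv, ← div_eq_mul_inv, mul_div_mul_left_eq_div]
  have key2 : y₂ ^ (e - e') = h ^ (z - z') := by
    rw [zpow_sub, zpow_sub, h2, h4]
    rw [← div_eq_mul_inv, ← div_eq_mul_inv, mul_div_mul_left_eq_div]
  have hqp : Prime ((q : ℤ)) := by rw [Int.prime_iff_natAbs_prime]; simpa using hq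
  have hcop : IsCoprime (e - e') (q : ℤ) := (hqp.coprime_iff_not_dvd.mpr hne).symm
  obtain ⟨u, v, huv⟩ := hcop
  -- y = (y^(e-e'))^u * (y^q)^v
  have expand : ∀ y : G, y = y ^ ((e - e') * u) * y ^ ((q : ℤ) * v) := by
    intro y
    rw [← zpow_add, mul_comm (e - e') u, mul_comm ((q:ℤ)) v, huv, zpow_one]
  have hy1 : y₁ = g ^ ((z - z') * u) := by
    calc y₁ = y₁ ^ ((e - e') * u) * y₁ ^ ((q : ℤ) * v) := expand y₁
    _ = (y₁ ^ (e - e')) ^ u * (y₁ ^ (q : ℤ)) ^ v := by rw [zpow_mul, zpow_mul]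
    _ = (g ^ (z - z')) ^ u * 1 := by rw [key1, hord, one_zpow]
    _ = g ^ ((z - z') * u) := by rw [mul_one, ← zpow_mul]
  have hy2 : y₂ = h ^ ((z - z') * u) := by
    calc y₂ = y₂ ^ ((e - e') * u) * y₂ ^ ((q : ℤ) * v) := expand y₂
    _ = (y₂ ^ (e - e')) ^ u * (y₂ ^ (q : ℤ)) ^ v := by rw [zpow_mul, zpow_mul]
    _ = (h ^ (z - z')) ^ u * 1 := by rw [key2, hord, one_zpow]
    _ = h ^ ((z - z') * u) := by rw [mul_one, ← zpow_mul]
  set m : ℤ := (z - z') * u with hm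
  refine ⟨(m % (q : ℤ)).toNat, ?_, ?_⟩ <;>
  · have hmod : ((m % (q : ℤ)).toNat : ℤ) = m % (q : ℤ) :=
      Int.toNat_of_nonneg (Int.emod_nonneg m (by positivity))
    have reduce : ∀ a : G, a ^ m = a ^ ((m % (q : ℤ)).toNat) := by
      intro a
      rw [← zpow_natCast, hmod]
      conv_lhs => rw [← Int.emod_add_mul_ediv m (q : ℤ)]
      rw [zpow_add, zpow_mul, hord, one_zpow, mul_one]
    first
    | rw [hy1, reduce]
    | rw [hy2, reduce]
end
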